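/- For every real k > 0, every x₁ ∈ ℝ³, every constant vector Q ∈ ℂ³, and every unit vector β ∈ ℝ³, one has lim_{r→∞} r e^{−ikr} (∇ₓg(rβ, x₁) × Q) = (ik/(4π)) e^{−ik⟨β,x₁⟩} (β × Q), where β is viewed in ℂ³ and × is the cross product. In particular, the field v_E(x) = ∇ₓg(x,x₁) × Q has far-field amplitude A(β) = (ik/(4π)) e^{−ik⟨β,x₁⟩} β × Q. -/

import Mathlib

open Real

noncomputable section

/-- The Helmholtz Green's function `g(x,y) = exp(ik|x-y|)/(4π|x-y|)` on ℝ³. -/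
def g (k : ℝ) (x y : EuclideanSpace ℝ (Fin 3)) : ℂ :=
  Complex.exp (Complex.I * k * ‖x - y‖) / (4 * π * ‖x - y‖)

/-- The gradient of `g` in its first variable, as a vector in ℂ³. -/
def gradg (k : ℝ) (x y : EuclideanSpace ℝ (Fin 3)) : Fin 3 → ℂ :=
  fun j => fderiv ℝ (fun x' => g k x' y) x (EuclideanSpace.single j 1)

open Filter

lemma hasFDerivAt_norm_ne {F : Type*} [NormedAddCommGroup F] [InnerProductSpace ℝ F] {x : F}
    (hx : x ≠ 0) : HasFDerivAt (fun y : F => ‖y‖) (‖x‖⁻¹ • innerSL ℝ x) x := by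
  have h1 : HasFDerivAt (fun y : F => ‖y‖ ^ 2) ((2:ℝ) • innerSL ℝ x) x := by
    have := (hasStrictFDerivAt_norm_sq x).hasFDerivAt
    convert this using 1
    ext v; simp [two_smul]
  have hx' : ‖x‖ ≠ 0 := norm_ne_zero_iff.mpr hx
  have h2 := h1.sqrt (by positivity : ‖x‖ ^ 2 ≠ 0)
  have hs : Real.sqrt (‖x‖ ^ 2) = ‖x‖ := Real.sqrt_sq (norm_nonneg x)
  have heq : (fun y : F => Real.sqrt (‖y‖ ^ 2)) = fun y : F => ‖y‖ := by
    funext y; exact Real.sqrt_sq (norm_nonneg y)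
  rw [heq, hs] at h2
  convert h2 using 1
  rw [smul_smul]
  congr 1
  field_simp
lemma hasDerivAt_phi (k : ℝ) {t : ℝ} (ht : t ≠ 0) :
    HasDerivAt (fun s : ℝ => Complex.exp (Complex.I * k * s) / (4 * π * s))
      (Complex.exp (Complex.I * k * t) * (Complex.I * k * t - 1) / (4 * π * t ^ 2)) t := by
  have hπ : (π : ℂ) ≠ 0 := Complex.ofReal_ne_zero.mpr pi_ne_zero
  have ht' : (t : ℂ) ≠ 0 := Complex.ofReal_ne_zero.mpr ht
  have hre : HasDerivAt (fun s : ℝ => (s : ℂ)) 1 t := by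
    simpa using (hasDerivAt_id t).ofReal_comp
  have hnum : HasDerivAt (fun s : ℝ => Complex.exp (Complex.I * k * s))
      (Complex.I * k * Complex.exp (Complex.I * k * t)) t := by
    simpa [mul_comm] using ((hre.const_mul (Complex.I * k)).cexp)
  have hden : HasDerivAt (fun s : ℝ => (4 * (π : ℂ) * s)) (4 * π) t := by
    simpa using hre.const_mul (4 * (π : ℂ))
  have hden0 : (4 * (π : ℂ) * t) ≠ 0 := by
    simp [hπ, ht']
  have := hnum.div hden hden0
  refine this.congr_deriv ?_
  field_simp

lemma gradg_eq (k : ℝ) {x y : EuclideanSpace ℝ (Fin 3)} (hxy : x ≠ y) :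
    gradg k x y = fun j =>
      Complex.exp (Complex.I * k * ‖x - y‖) * (Complex.I * k * ‖x - y‖ - 1)
        / (4 * π * ‖x - y‖ ^ 3) * ((x - y) j : ℂ) := by
  have hsub : x - y ≠ 0 := sub_ne_zero.mpr hxy
  have hn : ‖x - y‖ ≠ 0 := norm_ne_zero_iff.mpr hsub
  have hnorm : HasFDerivAt (fun x' : EuclideanSpace ℝ (Fin 3) => ‖x' - y‖)
      (‖x - y‖⁻¹ • innerSL ℝ (x - y)) x := by
    have h2 : HasFDerivAt (fun x' : EuclideanSpace ℝ (Fin 3) => x' - y)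
        (ContinuousLinearMap.id ℝ _) x := (hasFDerivAt_id x).sub_const y
    have := (hasFDerivAt_norm_ne hsub).comp x h2
    rwa [ContinuousLinearMap.comp_id] at this
  have hphi := (hasDerivAt_phi k hn).hasFDerivAt
  have hg : HasFDerivAt (fun x' => g k x' y)
      ((ContinuousLinearMap.smulRight (1 : ℝ →L[ℝ] ℝ)
          (Complex.exp (Complex.I * k * ‖x - y‖) * (Complex.I * k * ‖x - y‖ - 1)
            / (4 * π * ‖x - y‖ ^ 2))).comp (‖x - y‖⁻¹ • innerSL ℝ (x - y))) x :=
    by exact hphi.comp x hnorm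
  funext j
  rw [gradg, hg.fderiv]
  have hip : (innerSL ℝ (x - y)) (EuclideanSpace.single j (1:ℝ)) = (x - y) j := by
    simp [EuclideanSpace.inner_single_right, real_inner_comm]
  simp only [ContinuousLinearMap.comp_apply, ContinuousLinearMap.smul_apply, hip,
    ContinuousLinearMap.smulRight_apply, ContinuousLinearMap.one_apply, smul_eq_mul,
    Complex.real_smul]
  push_cast
  field_simp

/-- for `k > 0`, `x₁ ∈ ℝ³`, `Q ∈ ℂ³`, and a unit vector `β`,
`lim_{r→∞} r e^{−ikr} (∇ₓg(rβ, x₁) × Q) = (ik/(4π)) e^{−ik⟨β,x₁⟩} (β × Q)` in ℂ³;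
i.e. the field `v_E(x) = ∇ₓg(x,x₁) × Q` has far-field amplitude
`A(β) = (ik/4π) e^{−ik⟨β,x₁⟩} β × Q`. -/
theorem vfield_far_field (k : ℝ) (hk : 0 < k) (x₁ : EuclideanSpace ℝ (Fin 3))
    (Q : Fin 3 → ℂ) (β : EuclideanSpace ℝ (Fin 3)) (hβ : ‖β‖ = 1) :
    Filter.Tendsto
      (fun r : ℝ =>
        ((r : ℂ) * Complex.exp (-(Complex.I * k * r))) • crossProduct (gradg k (r • β) x₁) Q)
      Filter.atTop
      (nhds ((Complex.I * k / (4 * π) * Complex.exp (-(Complex.I * k * ((inner ℝ β x₁ : ℝ) : ℂ)))) •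
        crossProduct (fun i => (β i : ℂ)) Q)) := by
  have hπ : (π : ℝ) ≠ 0 := pi_ne_zero
  set c : ℝ := (inner ℝ β x₁ : ℝ) with hc
  set R : ℝ → ℝ := fun r => ‖r • β - x₁‖ with hRdef
  -- basic bound
  have hRr : ∀ r : ℝ, 0 ≤ r → |R r - r| ≤ ‖x₁‖ := by
    intro r hr
    have h := abs_norm_sub_norm_le (r • β - x₁) (r • β)
    have hb : ‖r • β‖ = r := by
      rw [norm_smul, hβ, mul_one, Real.norm_eq_abs, abs_of_nonneg hr]
    simpa [hb] using h
  have hRlarge : ∀ r : ℝ, ‖x₁‖ + 1 ≤ r → 1 ≤ R r := by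
    intro r hr
    have h0r : (0:ℝ) ≤ r := le_trans (by positivity) hr
    have := abs_le.mp (hRr r h0r)
    linarith [this.1]
  have hkey : ∀ r : ℝ, R r ^ 2 - r ^ 2 = ‖x₁‖ ^ 2 - 2 * (r * c) := by
    intro r
    have h1 : R r ^ 2 = ‖r • β‖ ^ 2 - 2 * (inner ℝ (r • β) x₁ : ℝ) + ‖x₁‖ ^ 2 :=
      norm_sub_sq_real _ _
    have h2 : ‖r • β‖ ^ 2 = r ^ 2 := by
      rw [norm_smul, hβ, mul_one, Real.norm_eq_abs, sq_abs]
    have h3 : (inner ℝ (r • β) x₁ : ℝ) = r * c := real_inner_smul_left _ _ _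
    rw [h1, h2, h3]; ring
  -- (R r - r)/r → 0
  have h0 : Filter.Tendsto (fun r => (R r - r) / r) Filter.atTop (nhds 0) := by
    apply squeeze_zero_norm' (a := fun r => ‖x₁‖ / r)
    · filter_upwards [Filter.eventually_ge_atTop (1:ℝ)] with r hr
      have h0r : (0:ℝ) ≤ r := le_trans zero_le_one hr
      rw [Real.norm_eq_abs, abs_div, abs_of_nonneg h0r]
      gcongr
      exact hRr r h0r
    · simpa [div_eq_mul_inv] using tendsto_inv_atTop_zero.const_mul ‖x₁‖
  have hRtop : Filter.Tendsto R Filter.atTop Filter.atTop := by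
    have hbase : Filter.Tendsto (fun r : ℝ => r - ‖x₁‖) Filter.atTop Filter.atTop := by
      simpa [sub_eq_add_neg] using
        Filter.tendsto_atTop_add_const_right Filter.atTop (-‖x₁‖) Filter.tendsto_id
    apply Filter.tendsto_atTop_mono' _ ?_ hbase
    filter_upwards [Filter.eventually_ge_atTop (0:ℝ)] with r hr
    have := abs_le.mp (hRr r hr)
    linarith [this.1]
  -- R r - r → -c
  have hsub : Filter.Tendsto (fun r => R r - r) Filter.atTop (nhds (-c)) := by
    have hnum : Filter.Tendsto (fun r : ℝ => ‖x₁‖ ^ 2 / r - 2 * c) Filter.atTop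
        (nhds (0 - 2 * c)) := by
      apply Filter.Tendsto.sub_const
      exact tendsto_const_nhds.div_atTop tendsto_id
    have hden : Filter.Tendsto (fun r => (R r - r) / r + 2) Filter.atTop (nhds (0 + 2)) :=
      h0.add_const 2
    have hdiv := hnum.div hden (by norm_num)
    have hlim : (0 - 2 * c) / (0 + 2) = -c := by ring
    rw [hlim] at hdiv
    apply hdiv.congr'
    filter_upwards [Filter.eventually_ge_atTop (‖x₁‖ + 1)] with r hr
    have h0r : (0:ℝ) < r := lt_of_lt_of_le (by positivity) hr
    have hRpos : (0:ℝ) < R r := lt_of_lt_of_le one_pos (hRlarge r hr)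
    have hRr0 : R r + r ≠ 0 := by positivity
    have hmul : (R r - r) * (R r + r) = ‖x₁‖ ^ 2 - 2 * (r * c) := by
      have := hkey r; nlinarith [this]
    have hden2 : (R r - r) / r + 2 = (R r + r) / r := by
      field_simp; ring
    simp only [Pi.div_apply]
    rw [hden2, div_eq_iff (by positivity : (R r + r)/r ≠ 0)]
    field_simp
    linear_combination -hkey r
  -- r / R r → 1
  have hratio : Filter.Tendsto (fun r => r / R r) Filter.atTop (nhds 1) := by
    have h4 : Filter.Tendsto (fun r => ((R r - r) / r + 1)⁻¹) Filter.atTop (nhds ((0+1:ℝ)⁻¹)) :=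
      (h0.add_const 1).inv₀ (by norm_num)
    norm_num at h4
    apply h4.congr'
    filter_upwards [Filter.eventually_ge_atTop (‖x₁‖ + 1)] with r hr
    have h0r : (0:ℝ) < r := lt_of_lt_of_le (by positivity) hr
    have h5 : (R r - r) / r + 1 = R r / r := by field_simp; ring
    rw [h5, inv_div]
  -- complex ingredients
  have hπC : (π : ℂ) ≠ 0 := Complex.ofReal_ne_zero.mpr hπ
  set L : ℂ := Complex.I * k / (4 * π) * Complex.exp (-(Complex.I * k * (c : ℂ))) with hL
  set Cβ : Fin 3 → ℂ := crossProduct (fun i => (β i : ℂ)) Q with hCβ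
  set Cx : Fin 3 → ℂ := crossProduct (fun i => (x₁ i : ℂ)) Q with hCx
  set a : ℝ → ℂ := fun r =>
    Complex.exp (Complex.I * k * ((R r - r : ℝ) : ℂ)) * (Complex.I * k - (((R r)⁻¹ : ℝ) : ℂ)) *
      (((r / R r : ℝ) : ℂ)) ^ 2 / (4 * π) with ha
  have haT : Filter.Tendsto a Filter.atTop (nhds L) := by
    have h1 : Filter.Tendsto (fun r => ((R r - r : ℝ) : ℂ)) Filter.atTop (nhds ((-c : ℝ) : ℂ)) :=
      (Complex.continuous_ofReal.tendsto _).comp hsub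
    have h2 : Filter.Tendsto (fun r => Complex.exp (Complex.I * k * ((R r - r : ℝ) : ℂ)))
        Filter.atTop (nhds (Complex.exp (Complex.I * k * ((-c : ℝ) : ℂ)))) :=
      (Complex.continuous_exp.tendsto _).comp (h1.const_mul (Complex.I * k))
    have h3 : Filter.Tendsto (fun r => (((R r)⁻¹ : ℝ) : ℂ)) Filter.atTop (nhds ((0 : ℝ) : ℂ)) :=
      (Complex.continuous_ofReal.tendsto _).comp (tendsto_inv_atTop_zero.comp hRtop)
    have h4 : Filter.Tendsto (fun r => (((r / R r : ℝ)) : ℂ)) Filter.atTop (nhds ((1 : ℝ) : ℂ)) :=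
      (Complex.continuous_ofReal.tendsto _).comp hratio
    have h5 := ((h2.mul (((tendsto_const_nhds (x := Complex.I * (k : ℂ))).sub h3))).mul
      (h4.pow 2)).div_const (4 * (π : ℂ))
    have hval : Complex.exp (Complex.I * k * ((-c : ℝ) : ℂ)) * (Complex.I * k - ((0 : ℝ) : ℂ)) *
        (((1 : ℝ) : ℂ)) ^ 2 / (4 * π) = L := by
      rw [hL]
      push_cast
      rw [show (Complex.I * (k : ℂ) * (-(c : ℂ))) = -(Complex.I * k * c) from by ring]
      ring
    rw [← hval]
    exact h5
  have hb : Filter.Tendsto (fun r => a r / (r : ℂ)) Filter.atTop (nhds 0) := by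
    have h6 : Filter.Tendsto (fun r : ℝ => ((r⁻¹ : ℝ) : ℂ)) Filter.atTop (nhds ((0 : ℝ) : ℂ)) :=
      (Complex.continuous_ofReal.tendsto _).comp tendsto_inv_atTop_zero
    have h7 := haT.mul h6
    rw [Complex.ofReal_zero, mul_zero] at h7
    apply h7.congr
    intro r
    rw [Complex.ofReal_inv, div_eq_mul_inv]
  have hmain : Filter.Tendsto (fun r => a r • Cβ - (a r / (r : ℂ)) • Cx) Filter.atTop
      (nhds (L • Cβ)) := by
    have := (haT.smul_const Cβ).sub (hb.smul_const Cx)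
    simpa using this
  apply hmain.congr'
  filter_upwards [Filter.eventually_ge_atTop (‖x₁‖ + 1)] with r hr
  have h0r : (0:ℝ) < r := lt_of_lt_of_le (by positivity) hr
  have hRpos : (0:ℝ) < R r := lt_of_lt_of_le one_pos (hRlarge r hr)
  have hne : r • β ≠ x₁ := by
    intro h
    have : R r = 0 := by simp [hRdef, h]
    linarith
  have hrC : (r : ℂ) ≠ 0 := Complex.ofReal_ne_zero.mpr (ne_of_gt h0r)
  have hRC : ((R r : ℝ) : ℂ) ≠ 0 := Complex.ofReal_ne_zero.mpr (ne_of_gt hRpos)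
  set w : ℂ := Complex.exp (Complex.I * k * ((R r : ℝ) : ℂ)) *
      (Complex.I * k * ((R r : ℝ) : ℂ) - 1) / (4 * π * ((R r : ℝ) : ℂ) ^ 3) with hw
  have hgrad : gradg k (r • β) x₁ =
      w • ((r : ℂ) • (fun i => (β i : ℂ)) - fun i => (x₁ i : ℂ)) := by
    rw [gradg_eq k hne]
    funext j
    have happ : (r • β - x₁) j = r * β j - x₁ j := rfl
    simp only [Pi.smul_apply, Pi.sub_apply, smul_eq_mul, happ, hw]
    rw [show ‖r • β - x₁‖ = R r from rfl]
    push_cast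
    ring
  have hcross : crossProduct (gradg k (r • β) x₁) Q = w • ((r : ℂ) • Cβ - Cx) := by
    rw [hgrad, map_smul, LinearMap.smul_apply, map_sub, LinearMap.sub_apply, map_smul,
      LinearMap.smul_apply, hCβ, hCx]
  have hexp : Complex.exp (Complex.I * k * ((R r - r : ℝ) : ℂ)) =
      Complex.exp (Complex.I * k * ((R r : ℝ) : ℂ)) * Complex.exp (-(Complex.I * k * r)) := by
    rw [← Complex.exp_add]
    congr 1
    push_cast
    ring
  have ha1 : a r = ((r : ℂ) * Complex.exp (-(Complex.I * k * r)) * w) * r := by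
    rw [ha]
    simp only []
    rw [hexp, hw]
    push_cast
    field_simp
  have ha2 : a r / (r : ℂ) = (r : ℂ) * Complex.exp (-(Complex.I * k * r)) * w := by
    rw [ha1, mul_div_cancel_right₀ _ hrC]
  rw [hcross, ha2, ha1]
  module

end
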